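/- Let T₁ and T₂ be the vertex sets of two embedded four-cycles in a triangle-free graph Γ such that T₁ ∩ T₂ = {s, t, u} where s and u are both adjacent to t. Then s and u are not adjacent, W_{T₁ ∩ T₂} is isomorphic to D∞ × (ℤ/2ℤ), and W_{T₁ ∪ T₂} is isomorphic to the amalgamated product W_{T₁} *_{D∞ × ℤ/2ℤ} W_{T₂}, where each W_{T_i} is isomorphic to D∞ × D∞. -/

import Mathlib

/-- The set of relators of the right-angled Coxeter group of a graph `Γ`:
squares of the generators, and commutators of generators joined by an edge. -/
def racgRels {V : Type*} (Γ : SimpleGraph V) : Set (FreeGroup V) :=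
  {r | (∃ s : V, r = FreeGroup.of s * FreeGroup.of s) ∨
       (∃ s t : V, Γ.Adj s t ∧
         r = FreeGroup.of s * FreeGroup.of t * (FreeGroup.of s)⁻¹ * (FreeGroup.of t)⁻¹)}

/-- The right-angled Coxeter group of a graph `Γ`. -/
abbrev RACG {V : Type*} (Γ : SimpleGraph V) : Type _ := PresentedGroup (racgRels Γ)

/-- The generator of `RACG Γ` corresponding to a vertex `s`. -/
def racgGen {V : Type*} (Γ : SimpleGraph V) (s : V) : RACG Γ :=
  PresentedGroup.of (rels := racgRels Γ) s


/-- An embedded four-cycle in a simple graph `G`: four vertices in cyclic order,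
with consecutive vertices adjacent and the two diagonals distinct non-edges. -/
structure FourCycle {V : Type*} (G : SimpleGraph V) where
  v : Fin 4 → V
  adj : ∀ i : Fin 4, G.Adj (v i) (v (i + 1))
  ne02 : v 0 ≠ v 2
  ne13 : v 1 ≠ v 3
  nadj02 : ¬ G.Adj (v 0) (v 2)
  nadj13 : ¬ G.Adj (v 1) (v 3)

/-- `{a, b}` is an edge of the four-cycle `c`. -/
def FourCycle.HasEdge {V : Type*} {G : SimpleGraph V} (c : FourCycle G) (a b : V) : Prop :=
  ∃ i : Fin 4, (c.v i = a ∧ c.v (i + 1) = b) ∨ (c.v i = b ∧ c.v (i + 1) = a)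

/-- Two four-cycles share a pair of adjacent edges (two edges meeting at a vertex):
this is the adjacency relation defining the four-cycle graph `Γ⁴`. -/
def SharesPair {V : Type*} {G : SimpleGraph V} (c d : FourCycle G) : Prop :=
  ∃ x y z : V, x ≠ z ∧ c.HasEdge x y ∧ c.HasEdge y z ∧ d.HasEdge x y ∧ d.HasEdge y z

/-- `Γ` is CFS: some connected component of the four-cycle graph `Γ⁴` has support
the entire vertex set of `Γ`. -/
def IsCFS {V : Type*} (G : SimpleGraph V) : Prop :=
  ∃ c : FourCycle G, ∀ x : V, ∃ d : FourCycle G,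
    Relation.ReflTransGen SharesPair c d ∧ ∃ i : Fin 4, d.v i = x
universe u

/-- A two-element family of groups indexed by `Bool`, used to form binary
amalgamated free products via `Monoid.PushoutI`. -/
def famG (G₁ G₂ : Type u) : Bool → Type u
  | true => G₁
  | false => G₂

instance famGGroup (G₁ G₂ : Type u) [Group G₁] [Group G₂] : ∀ b, Group (famG G₁ G₂ b)
  | true => ‹Group G₁›
  | false => ‹Group G₂›

/-- The pair of amalgamating homomorphisms, as a `Bool`-indexed family. -/
def famHom {A G₁ G₂ : Type u} [Group A] [Group G₁] [Group G₂]
    (f : A →* G₁) (g : A →* G₂) : ∀ b, A →* famG G₁ G₂ b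
  | true => f
  | false => g

/-- The amalgamated free product `G₁ *_A G₂` along `f : A →* G₁`, `g : A →* G₂`. -/
abbrev AmalgProd {A G₁ G₂ : Type u} [Group A] [Group G₁] [Group G₂]
    (f : A →* G₁) (g : A →* G₂) : Type u :=
  Monoid.PushoutI (famHom f g)

/-- The infinite dihedral group, as the free product `(ℤ/2ℤ) * (ℤ/2ℤ)`. -/
abbrev Dinf : Type := Monoid.Coprod (Multiplicative (ZMod 2)) (Multiplicative (ZMod 2))

section RacgHelpers

variable {V : Type*} {Γ : SimpleGraph V}

open Subgroup

lemma racg_rel_one {r : FreeGroup V} (hr : r ∈ racgRels Γ) :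
    (PresentedGroup.mk (racgRels Γ) r) = 1 := by
  have : r ∈ Subgroup.normalClosure (racgRels Γ) := Subgroup.subset_normalClosure hr
  rwa [← QuotientGroup.eq_one_iff r] at this

lemma racgGen_sq (s : V) : racgGen Γ s * racgGen Γ s = 1 := by
  have := racg_rel_one (Γ := Γ) (r := FreeGroup.of s * FreeGroup.of s) (Or.inl ⟨s, rfl⟩)
  simpa [racgGen, PresentedGroup.of] using this

lemma racgGen_comm {s t : V} (h : Γ.Adj s t) :
    Commute (racgGen Γ s) (racgGen Γ t) := by
  have := racg_rel_one (Γ := Γ)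
    (r := FreeGroup.of s * FreeGroup.of t * (FreeGroup.of s)⁻¹ * (FreeGroup.of t)⁻¹)
    (Or.inr ⟨s, t, h, rfl⟩)
  simp only [racgGen, PresentedGroup.of, map_mul, map_inv] at this ⊢
  rw [Commute, SemiconjBy, ← mul_inv_eq_one]
  rw [← this]
  group

/-- A homomorphism from `Multiplicative (ZMod 2)` determined by an involution. -/
def homOfSq {G : Type*} [Group G] (g : G) (hg : g * g = 1) : Multiplicative (ZMod 2) →* G where
  toFun := fun x => g ^ (Multiplicative.toAdd x).val
  map_one' := by simp
  map_mul' := by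
    intro x y
    have key : ∀ a b : ZMod 2, (a + b).val = a.val + b.val ∨
        (a + b).val + 2 = a.val + b.val := by decide
    rcases key (Multiplicative.toAdd x) (Multiplicative.toAdd y) with h1 | h1
    · show g ^ (_ : ZMod 2).val = _
      rw [toAdd_mul, h1, pow_add]
    · show g ^ (_ : ZMod 2).val = _
      have : g ^ ((Multiplicative.toAdd x + Multiplicative.toAdd y).val + 2)
          = g ^ (Multiplicative.toAdd x).val * g ^ (Multiplicative.toAdd y).val := by
        rw [h1, pow_add]
      rw [pow_add, pow_two, hg, mul_one] at this
      rw [toAdd_mul, this]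

@[simp] lemma homOfSq_apply {G : Type*} [Group G] (g : G) (hg : g * g = 1)
    (x : Multiplicative (ZMod 2)) :
    homOfSq g hg x = g ^ (Multiplicative.toAdd x).val := rfl

@[simp] lemma homOfSq_gen {G : Type*} [Group G] (g : G) (hg : g * g = 1) :
    homOfSq g hg (Multiplicative.ofAdd 1) = g := by
  show g ^ (1 : ZMod 2).val = g
  have : (1 : ZMod 2).val = 1 := rfl
  rw [this, pow_one]

lemma mzmod2_hom_ext {M : Type*} [Monoid M] {f g : Multiplicative (ZMod 2) →* M}
    (h : f (Multiplicative.ofAdd 1) = g (Multiplicative.ofAdd 1)) : f = g := by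
  refine MonoidHom.ext fun x => ?_
  have : x = 1 ∨ x = Multiplicative.ofAdd 1 := by
    have hd : ∀ a : ZMod 2, a = 0 ∨ a = 1 := by decide
    rcases hd (Multiplicative.toAdd x) with h1 | h1
    · left; exact ofAdd_toAdd x ▸ (by rw [h1]; rfl)
    · right; exact ofAdd_toAdd x ▸ (by rw [h1])
  rcases this with rfl | rfl
  · simp
  · exact h

lemma prodHom_ext {M N P : Type*} [Monoid M] [Monoid N] [Monoid P] {f g : M × N →* P}
    (h1 : f.comp (MonoidHom.inl M N) = g.comp (MonoidHom.inl M N))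
    (h2 : f.comp (MonoidHom.inr M N) = g.comp (MonoidHom.inr M N)) : f = g := by
  ext ⟨m, n⟩
  have e : (m, n) = (m, 1) * ((1 : M), n) := by simp
  rw [e, map_mul, map_mul]
  rw [show ((m,(1:N))) = MonoidHom.inl M N m from rfl,
      show (((1:M),n)) = MonoidHom.inr M N n from rfl,
      ← MonoidHom.comp_apply, ← MonoidHom.comp_apply, h1, h2]
  rfl

/-- Universal property of the RACG. -/
def racgLift {W : Type*} {G : SimpleGraph W} {K : Type*} [Group K] (f : W → K)
    (hsq : ∀ w, f w * f w = 1) (hcomm : ∀ a b, G.Adj a b → Commute (f a) (f b)) :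
    RACG G →* K :=
  PresentedGroup.toGroup (f := f) (by
    rintro r (⟨s, rfl⟩ | ⟨s, t, hadj, rfl⟩)
    · simpa using hsq s
    · simp only [map_mul, map_inv, FreeGroup.lift_apply_of]
      rw [(hcomm s t hadj).eq]
      group)

@[simp] lemma racgLift_gen {W : Type*} {G : SimpleGraph W} {K : Type*} [Group K] (f : W → K)
    (hsq : ∀ w, f w * f w = 1) (hcomm : ∀ a b, G.Adj a b → Commute (f a) (f b)) (w : W) :
    racgLift f hsq hcomm (racgGen G w) = f w :=
  PresentedGroup.toGroup.of _

variable (Γ) in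
/-- The canonical homomorphism `RACG (Γ.induce S) →* RACG Γ`. -/
def inducedHom (S : Set V) : RACG (Γ.induce S) →* RACG Γ :=
  racgLift (fun v => racgGen Γ v.val) (fun v => racgGen_sq v.val)
    (fun _ _ hadj => racgGen_comm hadj)

@[simp] lemma inducedHom_gen (S : Set V) (v : ↥S) :
    inducedHom Γ S (racgGen (Γ.induce S) v) = racgGen Γ v.val :=
  racgLift_gen _ _ _ v

open scoped Classical in
variable (Γ) in
/-- The retraction `RACG Γ →* RACG (Γ.induce S)` killing generators outside `S`. -/
noncomputable def racgRetr (S : Set V) : RACG Γ →* RACG (Γ.induce S) :=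
  racgLift (fun v => if h : v ∈ S then racgGen (Γ.induce S) ⟨v, h⟩ else 1)
    (by intro w
        split
        · exact racgGen_sq _
        · simp)
    (by intro a b hadj
        split <;> split
        · exact racgGen_comm (Γ := Γ.induce S) hadj
        · exact Commute.one_right _
        · exact Commute.one_left _
        · exact Commute.one_left _)

lemma racgRetr_comp (S : Set V) :
    (racgRetr Γ S).comp (inducedHom Γ S) = MonoidHom.id _ := by
  classical
  apply PresentedGroup.ext
  intro x
  show racgRetr Γ S (inducedHom Γ S (racgGen _ x)) = racgGen _ x
  rw [inducedHom_gen]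
  unfold racgRetr
  rw [racgLift_gen]
  rw [dif_pos x.2]

lemma inducedHom_injective (S : Set V) : Function.Injective (inducedHom Γ S) := by
  have h := racgRetr_comp (Γ := Γ) S
  intro a b hab
  have : racgRetr Γ S (inducedHom Γ S a) = racgRetr Γ S (inducedHom Γ S b) := by rw [hab]
  simpa [← MonoidHom.comp_apply, h] using this

lemma inducedHom_range (S : Set V) :
    (inducedHom Γ S).range = closure (racgGen Γ '' S) := by
  rw [MonoidHom.range_eq_map, ← PresentedGroup.closure_range_of (racgRels (Γ.induce S)),
    MonoidHom.map_closure]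
  congr 1
  rw [← Set.range_comp]
  have : (inducedHom Γ S ∘ PresentedGroup.of) = fun x : ↥S => racgGen Γ ↑x := by
    funext x; exact inducedHom_gen S x
  rw [this, ← Set.image_eq_range]

variable (Γ) in
/-- The special subgroup on `S` is the RACG of the induced subgraph. -/
noncomputable def specialEquiv (S : Set V) :
    RACG (Γ.induce S) ≃* ↥(closure (racgGen Γ '' S)) :=
  (MulEquiv.trans (MonoidHom.ofInjective (inducedHom_injective S))
    (MulEquiv.subgroupCongr (inducedHom_range S)))

@[simp] lemma specialEquiv_apply_coe (S : Set V) (x : RACG (Γ.induce S)) :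
    (specialEquiv Γ S x : RACG Γ) = inducedHom Γ S x := rfl

end RacgHelpers
section SmallIsos

open Subgroup Monoid

@[simp] lemma zmod2_val_one : (1 : ZMod 2).val = 1 := rfl

lemma g2sq : (Multiplicative.ofAdd (1 : ZMod 2)) * (Multiplicative.ofAdd (1 : ZMod 2)) = 1 := by
  decide

/-- notation: the generator of `Multiplicative (ZMod 2)` -/
noncomputable abbrev g2 : Multiplicative (ZMod 2) := Multiplicative.ofAdd 1

lemma commute_prod_mk {M N : Type*} [Monoid M] [Monoid N] (x : M) (y : N) :
    Commute ((x, 1) : M × N) ((1, y) : M × N) := by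
  simp [commute_iff_eq, Prod.ext_iff]

/-- The RACG of a path `a - b - c` (with `a, c` non-adjacent) is `D∞ × ℤ/2`. -/
noncomputable def iso2 {W : Type*} (G : SimpleGraph W) (a b c : W)
    (hab : G.Adj a b) (hbc : G.Adj b c) (hac : ¬ G.Adj a c) (hacne : a ≠ c)
    (hcover : ∀ x : W, x = a ∨ x = b ∨ x = c) :
    RACG G ≃* Dinf × Multiplicative (ZMod 2) := by
  classical
  -- the vertex assignment
  set f : W → Dinf × Multiplicative (ZMod 2) :=
    fun x => if x = a then (Coprod.inl g2, 1) else if x = c then (Coprod.inr g2, 1)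
      else (1, g2) with hf
  have hfa : f a = (Coprod.inl g2, 1) := by simp [hf]
  have hfc : f c = (Coprod.inr g2, 1) := by simp [hf, hacne.symm]
  have hfb : f b = (1, g2) := by simp [hf, hab.ne', hbc.ne]
  have hsq : ∀ x, f x * f x = 1 := by
    intro x
    rcases hcover x with rfl | rfl | rfl
    · rw [hfa]; rw [Prod.mk_mul_mk, ← map_mul, g2sq, one_mul, map_one]; rfl
    · rw [hfb]; rw [Prod.mk_mul_mk, g2sq, one_mul]; rfl
    · rw [hfc]; rw [Prod.mk_mul_mk, ← map_mul, g2sq, one_mul, map_one]; rfl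
  have hcomm : ∀ x y, G.Adj x y → Commute (f x) (f y) := by
    intro x y hxy
    rcases hcover x with rfl | rfl | rfl <;> rcases hcover y with rfl | rfl | rfl
    · exact absurd hxy (G.irrefl)
    · rw [hfa, hfb]; exact commute_prod_mk _ _
    · exact absurd hxy hac
    · rw [hfa, hfb]; exact (commute_prod_mk _ _).symm
    · exact absurd hxy (G.irrefl)
    · rw [hfc, hfb]; exact (commute_prod_mk _ _).symm
    · exact absurd hxy (fun h => hac (h.symm))
    · rw [hfc, hfb]; exact commute_prod_mk _ _
    · exact absurd hxy (G.irrefl)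
  -- forward map
  set F : RACG G →* Dinf × Multiplicative (ZMod 2) := racgLift f hsq hcomm with hF
  -- backward map
  set BD : Dinf →* RACG G :=
    Coprod.lift (homOfSq (racgGen G a) (racgGen_sq a)) (homOfSq (racgGen G c) (racgGen_sq c))
    with hBD
  set BZ : Multiplicative (ZMod 2) →* RACG G := homOfSq (racgGen G b) (racgGen_sq b) with hBZ
  have hBDb : ∀ m, Commute (BD m) (racgGen G b) := by
    intro m
    induction m using Coprod.induction_on with
    | inl x => rw [hBD, Coprod.lift_apply_inl, homOfSq_apply]
               exact (racgGen_comm hab).pow_left _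
    | inr y => rw [hBD, Coprod.lift_apply_inr, homOfSq_apply]
               exact ((racgGen_comm hbc).symm).pow_left _
    | mul p q hp hq => rw [map_mul]; exact hp.mul_left hq
  have hcomm2 : ∀ m n, Commute (BD m) (BZ n) := by
    intro m n
    rw [hBZ, homOfSq_apply]
    exact (hBDb m).pow_right _
  set B : Dinf × Multiplicative (ZMod 2) →* RACG G := MonoidHom.noncommCoprod BD BZ hcomm2
    with hB
  refine MonoidHom.toMulEquiv F B ?_ ?_
  · apply PresentedGroup.ext
    intro x
    show B (F (racgGen G x)) = racgGen G x
    rw [hF, racgLift_gen]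
    rcases hcover x with rfl | rfl | rfl
    · rw [hfa, hB, MonoidHom.noncommCoprod_apply]
      simp [hBD, hBZ, pow_one]
    · rw [hfb, hB, MonoidHom.noncommCoprod_apply]
      simp [hBD, hBZ, pow_one]
    · rw [hfc, hB, MonoidHom.noncommCoprod_apply]
      simp [hBD, hBZ, pow_one]
  · apply prodHom_ext
    · apply Coprod.hom_ext
      · apply mzmod2_hom_ext
        show F (B (Coprod.inl g2, 1)) = (Coprod.inl g2, 1)
        rw [hB, MonoidHom.noncommCoprod_apply]
        simp only [hBD, hBZ, Coprod.lift_apply_inl, homOfSq_gen, map_one, mul_one]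
        rw [hF, racgLift_gen, hfa]
      · apply mzmod2_hom_ext
        show F (B (Coprod.inr g2, 1)) = (Coprod.inr g2, 1)
        rw [hB, MonoidHom.noncommCoprod_apply]
        simp only [hBD, hBZ, Coprod.lift_apply_inr, homOfSq_gen, map_one, mul_one]
        rw [hF, racgLift_gen, hfc]
    · apply mzmod2_hom_ext
      show F (B (1, g2)) = (1, g2)
      rw [hB, MonoidHom.noncommCoprod_apply]
      simp only [hBD, hBZ, homOfSq_gen, map_one, one_mul]
      rw [hF, racgLift_gen, hfb]

end SmallIsos
section Iso4

open Subgroup Monoid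

/-- The RACG of a four-cycle `a - b - c - d - a` is `D∞ × D∞`. -/
noncomputable def iso4 {W : Type*} (G : SimpleGraph W) (a b c d : W)
    (hab : G.Adj a b) (hbc : G.Adj b c) (hcd : G.Adj c d) (hda : G.Adj d a)
    (hac : ¬ G.Adj a c) (hbd : ¬ G.Adj b d) (hacne : a ≠ c) (hbdne : b ≠ d)
    (hcover : ∀ x : W, x = a ∨ x = b ∨ x = c ∨ x = d) :
    RACG G ≃* Dinf × Dinf := by
  classical
  set f : W → Dinf × Dinf :=
    fun x => if x = a then (Coprod.inl g2, 1) else if x = c then (Coprod.inr g2, 1)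
      else if x = b then (1, Coprod.inl g2) else (1, Coprod.inr g2) with hf
  have hfa : f a = (Coprod.inl g2, 1) := by simp [hf]
  have hfc : f c = (Coprod.inr g2, 1) := by simp [hf, hacne.symm]
  have hfb : f b = (1, Coprod.inl g2) := by simp [hf, hab.ne', hbc.ne]
  have hfd : f d = (1, Coprod.inr g2) := by simp [hf, hda.ne, hcd.ne', hbdne.symm]
  have hinl2 : (Coprod.inl g2 : Dinf) * Coprod.inl g2 = 1 := by
    rw [← map_mul, g2sq, map_one]
  have hinr2 : (Coprod.inr g2 : Dinf) * Coprod.inr g2 = 1 := by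
    rw [← map_mul, g2sq, map_one]
  have hsq : ∀ x, f x * f x = 1 := by
    intro x
    rcases hcover x with rfl | rfl | rfl | rfl
    · rw [hfa, Prod.mk_mul_mk, hinl2, one_mul]; rfl
    · rw [hfb, Prod.mk_mul_mk, hinl2, one_mul]; rfl
    · rw [hfc, Prod.mk_mul_mk, hinr2, one_mul]; rfl
    · rw [hfd, Prod.mk_mul_mk, hinr2, one_mul]; rfl
  have hcomm : ∀ x y, G.Adj x y → Commute (f x) (f y) := by
    intro x y hxy
    rcases hcover x with rfl | rfl | rfl | rfl <;> rcases hcover y with rfl | rfl | rfl | rfl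
    · exact absurd hxy (G.irrefl)
    · rw [hfa, hfb]; exact commute_prod_mk _ _
    · exact absurd hxy hac
    · rw [hfa, hfd]; exact commute_prod_mk _ _
    · rw [hfb, hfa]; exact (commute_prod_mk _ _).symm
    · exact absurd hxy (G.irrefl)
    · rw [hfb, hfc]; exact (commute_prod_mk _ _).symm
    · exact absurd hxy hbd
    · exact absurd hxy (fun h => hac h.symm)
    · rw [hfc, hfb]; exact commute_prod_mk _ _
    · exact absurd hxy (G.irrefl)
    · rw [hfc, hfd]; exact commute_prod_mk _ _
    · rw [hfd, hfa]; exact (commute_prod_mk _ _).symm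
    · exact absurd hxy (fun h => hbd h.symm)
    · rw [hfd, hfc]; exact (commute_prod_mk _ _).symm
    · exact absurd hxy (G.irrefl)
  set F : RACG G →* Dinf × Dinf := racgLift f hsq hcomm with hF
  set B1 : Dinf →* RACG G :=
    Coprod.lift (homOfSq (racgGen G a) (racgGen_sq a)) (homOfSq (racgGen G c) (racgGen_sq c))
    with hB1
  set B2 : Dinf →* RACG G :=
    Coprod.lift (homOfSq (racgGen G b) (racgGen_sq b)) (homOfSq (racgGen G d) (racgGen_sq d))
    with hB2
  have hcb : ∀ m, Commute (B1 m) (racgGen G b) := by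
    intro m
    induction m using Coprod.induction_on with
    | inl x => rw [hB1, Coprod.lift_apply_inl, homOfSq_apply]
               exact (racgGen_comm hab).pow_left _
    | inr y => rw [hB1, Coprod.lift_apply_inr, homOfSq_apply]
               exact ((racgGen_comm hbc).symm).pow_left _
    | mul p q hp hq => rw [map_mul]; exact hp.mul_left hq
  have hcd' : ∀ m, Commute (B1 m) (racgGen G d) := by
    intro m
    induction m using Coprod.induction_on with
    | inl x => rw [hB1, Coprod.lift_apply_inl, homOfSq_apply]
               exact ((racgGen_comm hda).symm).pow_left _
    | inr y => rw [hB1, Coprod.lift_apply_inr, homOfSq_apply]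
               exact (racgGen_comm hcd).pow_left _
    | mul p q hp hq => rw [map_mul]; exact hp.mul_left hq
  have hcomm2 : ∀ m n, Commute (B1 m) (B2 n) := by
    intro m n
    induction n using Coprod.induction_on with
    | inl x => rw [hB2, Coprod.lift_apply_inl, homOfSq_apply]
               exact (hcb m).pow_right _
    | inr y => rw [hB2, Coprod.lift_apply_inr, homOfSq_apply]
               exact (hcd' m).pow_right _
    | mul p q hp hq => rw [map_mul]; exact hp.mul_right hq
  set B : Dinf × Dinf →* RACG G := MonoidHom.noncommCoprod B1 B2 hcomm2 with hB
  refine MonoidHom.toMulEquiv F B ?_ ?_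
  · apply PresentedGroup.ext
    intro x
    show B (F (racgGen G x)) = racgGen G x
    rw [hF, racgLift_gen]
    rcases hcover x with rfl | rfl | rfl | rfl
    · rw [hfa, hB, MonoidHom.noncommCoprod_apply]; simp [hB1, hB2, pow_one]
    · rw [hfb, hB, MonoidHom.noncommCoprod_apply]; simp [hB1, hB2, pow_one]
    · rw [hfc, hB, MonoidHom.noncommCoprod_apply]; simp [hB1, hB2, pow_one]
    · rw [hfd, hB, MonoidHom.noncommCoprod_apply]; simp [hB1, hB2, pow_one]
  · apply prodHom_ext
    · apply Coprod.hom_ext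
      · apply mzmod2_hom_ext
        show F (B (Coprod.inl g2, 1)) = (Coprod.inl g2, 1)
        rw [hB, MonoidHom.noncommCoprod_apply]
        simp only [hB1, hB2, Coprod.lift_apply_inl, homOfSq_gen, map_one, mul_one]
        rw [hF, racgLift_gen, hfa]
      · apply mzmod2_hom_ext
        show F (B (Coprod.inr g2, 1)) = (Coprod.inr g2, 1)
        rw [hB, MonoidHom.noncommCoprod_apply]
        simp only [hB1, hB2, Coprod.lift_apply_inr, homOfSq_gen, map_one, mul_one]
        rw [hF, racgLift_gen, hfc]
    · apply Coprod.hom_ext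
      · apply mzmod2_hom_ext
        show F (B (1, Coprod.inl g2)) = (1, Coprod.inl g2)
        rw [hB, MonoidHom.noncommCoprod_apply]
        simp only [hB1, hB2, Coprod.lift_apply_inl, homOfSq_gen, map_one, one_mul]
        rw [hF, racgLift_gen, hfb]
      · apply mzmod2_hom_ext
        show F (B (1, Coprod.inr g2)) = (1, Coprod.inr g2)
        rw [hB, MonoidHom.noncommCoprod_apply]
        simp only [hB1, hB2, Coprod.lift_apply_inr, homOfSq_gen, map_one, one_mul]
        rw [hF, racgLift_gen, hfd]

end Iso4
section FourCycleFacts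

variable {V : Type*} {Γ : SimpleGraph V}

lemma FourCycle.a01 (c : FourCycle Γ) : Γ.Adj (c.v 0) (c.v 1) := by
  have := c.adj 0; norm_num at this; exact this
lemma FourCycle.a12 (c : FourCycle Γ) : Γ.Adj (c.v 1) (c.v 2) := by
  have := c.adj 1; norm_num at this; exact this
lemma FourCycle.a23 (c : FourCycle Γ) : Γ.Adj (c.v 2) (c.v 3) := by
  have := c.adj 2; norm_num at this; exact this
lemma FourCycle.a30 (c : FourCycle Γ) : Γ.Adj (c.v 3) (c.v 0) := by
  have := c.adj 3; norm_num at this; exact this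

lemma FourCycle.inj (c : FourCycle Γ) : Function.Injective c.v := by
  have h01 := c.a01.ne
  have h12 := c.a12.ne
  have h23 := c.a23.ne
  have h30 := c.a30.ne
  have h02 := c.ne02
  have h13 := c.ne13
  intro i j h
  fin_cases i <;> fin_cases j <;>
    first
      | rfl
      | (exfalso; simp_all [eq_comm])

/-- In a four-cycle, if `v i` and `v j` are non-adjacent and `k` is a third index,
then `v i` is adjacent to `v k`. -/
lemma FourCycle.adj_of_nadj (c : FourCycle Γ) {i j k : Fin 4} (hij : i ≠ j) (hik : i ≠ k)
    (hjk : j ≠ k) (hnadj : ¬ Γ.Adj (c.v i) (c.v j)) : Γ.Adj (c.v i) (c.v k) := by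
  have h01 := c.a01
  have h12 := c.a12
  have h23 := c.a23
  have h30 := c.a30
  have h10 := c.a01.symm
  have h21 := c.a12.symm
  have h32 := c.a23.symm
  have h03 := c.a30.symm
  fin_cases i <;> fin_cases j <;> fin_cases k <;> simp_all

end FourCycleFacts
section SubgroupExt

lemma subgroup_hom_ext {G K : Type*} [Group G] [Group K] {s : Set G}
    {f g : ↥(Subgroup.closure s) →* K}
    (h : ∀ x (hx : x ∈ s), f ⟨x, Subgroup.subset_closure hx⟩ = g ⟨x, Subgroup.subset_closure hx⟩) :
    f = g := by
  apply MonoidHom.eq_of_eqOn_dense (Subgroup.closure_closure_coe_preimage (k := s))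
  rintro ⟨x, hx⟩ hxs
  exact h x hxs

end SubgroupExt
section Amalgam

open Subgroup Monoid

variable {V : Type*} (Γ : SimpleGraph V) (T₁ T₂ : Set V)

/-- Abbreviation for the two inclusion maps appearing in the statement. -/
noncomputable abbrev jmap₁ : ↥(closure (racgGen Γ '' (T₁ ∩ T₂))) →* ↥(closure (racgGen Γ '' T₁)) :=
  Subgroup.inclusion (Subgroup.closure_mono (Set.image_mono Set.inter_subset_left))

noncomputable abbrev jmap₂ : ↥(closure (racgGen Γ '' (T₁ ∩ T₂))) →* ↥(closure (racgGen Γ '' T₂)) :=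
  Subgroup.inclusion (Subgroup.closure_mono (Set.image_mono Set.inter_subset_right))

lemma le1U : closure (racgGen Γ '' T₁) ≤ closure (racgGen Γ '' (T₁ ∪ T₂)) :=
  Subgroup.closure_mono (Set.image_mono Set.subset_union_left)

lemma le2U : closure (racgGen Γ '' T₂) ≤ closure (racgGen Γ '' (T₁ ∪ T₂)) :=
  Subgroup.closure_mono (Set.image_mono Set.subset_union_right)

lemma leIU : closure (racgGen Γ '' (T₁ ∩ T₂)) ≤ closure (racgGen Γ '' (T₁ ∪ T₂)) :=
  Subgroup.closure_mono (Set.image_mono (Set.inter_subset_left.trans Set.subset_union_left))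

/-- The canonical map from the amalgam to the subgroup generated by `T₁ ∪ T₂`. -/
noncomputable def amalgToSub :
    AmalgProd (jmap₁ Γ T₁ T₂) (jmap₂ Γ T₁ T₂) →* ↥(closure (racgGen Γ '' (T₁ ∪ T₂))) :=
  Monoid.PushoutI.lift
    (fun b => match b with
      | true => Subgroup.inclusion (le1U Γ T₁ T₂)
      | false => Subgroup.inclusion (le2U Γ T₁ T₂))
    (Subgroup.inclusion (leIU Γ T₁ T₂))
    (by intro b; cases b <;> rfl)

@[simp] lemma amalgToSub_of_true (x : ↥(closure (racgGen Γ '' T₁))) :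
    amalgToSub Γ T₁ T₂ (Monoid.PushoutI.of (φ := famHom (jmap₁ Γ T₁ T₂) (jmap₂ Γ T₁ T₂)) true x)
      = Subgroup.inclusion (le1U Γ T₁ T₂) x :=
  Monoid.PushoutI.lift_of _ _ _ _

@[simp] lemma amalgToSub_of_false (x : ↥(closure (racgGen Γ '' T₂))) :
    amalgToSub Γ T₁ T₂ (Monoid.PushoutI.of (φ := famHom (jmap₁ Γ T₁ T₂) (jmap₂ Γ T₁ T₂)) false x)
      = Subgroup.inclusion (le2U Γ T₁ T₂) x :=
  Monoid.PushoutI.lift_of _ _ _ _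

open scoped Classical in
/-- The vertex assignment for the inverse map. -/
noncomputable def psiF : ↥(T₁ ∪ T₂) → AmalgProd (jmap₁ Γ T₁ T₂) (jmap₂ Γ T₁ T₂) :=
  fun v =>
    if h : v.val ∈ T₁ then
      Monoid.PushoutI.of (φ := famHom (jmap₁ Γ T₁ T₂) (jmap₂ Γ T₁ T₂)) true
        ⟨racgGen Γ v.val, Subgroup.subset_closure ⟨v.val, h, rfl⟩⟩
    else
      Monoid.PushoutI.of (φ := famHom (jmap₁ Γ T₁ T₂) (jmap₂ Γ T₁ T₂)) false
        ⟨racgGen Γ v.val, Subgroup.subset_closure ⟨v.val, Or.resolve_left v.2 h, rfl⟩⟩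

lemma psiF_mem1 (v : ↥(T₁ ∪ T₂)) (h : v.val ∈ T₁)
    (m : racgGen Γ v.val ∈ closure (racgGen Γ '' T₁)) :
    psiF Γ T₁ T₂ v
      = Monoid.PushoutI.of (φ := famHom (jmap₁ Γ T₁ T₂) (jmap₂ Γ T₁ T₂)) true
        ⟨racgGen Γ v.val, m⟩ := by
  unfold psiF
  rw [dif_pos h]

lemma of_base_eq (x : V) (hx : x ∈ T₁ ∩ T₂)
    (m1 : racgGen Γ x ∈ closure (racgGen Γ '' T₁))
    (m2 : racgGen Γ x ∈ closure (racgGen Γ '' T₂)) :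
    Monoid.PushoutI.of (φ := famHom (jmap₁ Γ T₁ T₂) (jmap₂ Γ T₁ T₂)) true ⟨racgGen Γ x, m1⟩
      = Monoid.PushoutI.of (φ := famHom (jmap₁ Γ T₁ T₂) (jmap₂ Γ T₁ T₂)) false
        ⟨racgGen Γ x, m2⟩ := by
  have hI : racgGen Γ x ∈ closure (racgGen Γ '' (T₁ ∩ T₂)) :=
    Subgroup.subset_closure ⟨x, hx, rfl⟩
  have e1 := Monoid.PushoutI.of_apply_eq_base (famHom (jmap₁ Γ T₁ T₂) (jmap₂ Γ T₁ T₂)) true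
    ⟨racgGen Γ x, hI⟩
  have e2 := Monoid.PushoutI.of_apply_eq_base (famHom (jmap₁ Γ T₁ T₂) (jmap₂ Γ T₁ T₂)) false
    ⟨racgGen Γ x, hI⟩
  exact e1.trans e2.symm

lemma psiF_mem2 (v : ↥(T₁ ∪ T₂)) (h : v.val ∈ T₂)
    (m : racgGen Γ v.val ∈ closure (racgGen Γ '' T₂)) :
    psiF Γ T₁ T₂ v
      = Monoid.PushoutI.of (φ := famHom (jmap₁ Γ T₁ T₂) (jmap₂ Γ T₁ T₂)) false
        ⟨racgGen Γ v.val, m⟩ := by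
  by_cases h1 : v.val ∈ T₁
  · rw [psiF_mem1 Γ T₁ T₂ v h1 (Subgroup.subset_closure ⟨v.val, h1, rfl⟩)]
    exact of_base_eq Γ T₁ T₂ v.val ⟨h1, h⟩ _ _
  · unfold psiF
    rw [dif_neg h1]

variable {Γ T₁ T₂} in
/-- The inverse map from the RACG of the union to the amalgam. -/
noncomputable def subToAmalg
    (hedge : ∀ a b : V, a ∈ T₁ → a ∉ T₂ → b ∈ T₂ → b ∉ T₁ → ¬ Γ.Adj a b) :
    RACG (Γ.induce (T₁ ∪ T₂)) →* AmalgProd (jmap₁ Γ T₁ T₂) (jmap₂ Γ T₁ T₂) :=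
  racgLift (psiF Γ T₁ T₂)
    (by
      intro v
      by_cases h1 : v.val ∈ T₁
      · rw [psiF_mem1 Γ T₁ T₂ v h1 (Subgroup.subset_closure ⟨v.val, h1, rfl⟩)]
        exact (map_mul (Monoid.PushoutI.of (φ := famHom (jmap₁ Γ T₁ T₂) (jmap₂ Γ T₁ T₂)) true)
          _ _).symm.trans ((congrArg _
          (show ((⟨racgGen Γ v.val, Subgroup.subset_closure ⟨v.val, h1, rfl⟩⟩ :
              ↥(closure (racgGen Γ '' T₁)))
            * ⟨racgGen Γ v.val, Subgroup.subset_closure ⟨v.val, h1, rfl⟩⟩ = 1)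
            from Subtype.ext (racgGen_sq v.val))).trans (map_one _))
      · have h2 : v.val ∈ T₂ := Or.resolve_left v.2 h1
        rw [psiF_mem2 Γ T₁ T₂ v h2 (Subgroup.subset_closure ⟨v.val, h2, rfl⟩)]
        exact (map_mul (Monoid.PushoutI.of (φ := famHom (jmap₁ Γ T₁ T₂) (jmap₂ Γ T₁ T₂)) false)
          _ _).symm.trans ((congrArg _
          (show ((⟨racgGen Γ v.val, Subgroup.subset_closure ⟨v.val, h2, rfl⟩⟩ :
              ↥(closure (racgGen Γ '' T₂)))
            * ⟨racgGen Γ v.val, Subgroup.subset_closure ⟨v.val, h2, rfl⟩⟩ = 1)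
            from Subtype.ext (racgGen_sq v.val))).trans (map_one _)))
    (by
      intro a b hadj
      have hadj' : Γ.Adj a.val b.val := hadj
      by_cases ha1 : a.val ∈ T₁ <;> by_cases hb1 : b.val ∈ T₁
      · rw [psiF_mem1 Γ T₁ T₂ a ha1 (Subgroup.subset_closure ⟨a.val, ha1, rfl⟩),
          psiF_mem1 Γ T₁ T₂ b hb1 (Subgroup.subset_closure ⟨b.val, hb1, rfl⟩)]
        exact Commute.map (Subtype.ext (racgGen_comm hadj').eq) _
      · have hb2 : b.val ∈ T₂ := Or.resolve_left b.2 hb1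
        by_cases ha2 : a.val ∈ T₂
        · rw [psiF_mem2 Γ T₁ T₂ a ha2 (Subgroup.subset_closure ⟨a.val, ha2, rfl⟩),
            psiF_mem2 Γ T₁ T₂ b hb2 (Subgroup.subset_closure ⟨b.val, hb2, rfl⟩)]
          exact Commute.map (Subtype.ext (racgGen_comm hadj').eq) _
        · exact absurd hadj' (hedge a.val b.val ha1 ha2 hb2 hb1)
      · have ha2 : a.val ∈ T₂ := Or.resolve_left a.2 ha1
        by_cases hb2 : b.val ∈ T₂
        · rw [psiF_mem2 Γ T₁ T₂ a ha2 (Subgroup.subset_closure ⟨a.val, ha2, rfl⟩),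
            psiF_mem2 Γ T₁ T₂ b hb2 (Subgroup.subset_closure ⟨b.val, hb2, rfl⟩)]
          exact Commute.map (Subtype.ext (racgGen_comm hadj').eq) _
        · exact absurd hadj'.symm (hedge b.val a.val hb1 hb2 ha2 ha1)
      · have ha2 : a.val ∈ T₂ := Or.resolve_left a.2 ha1
        have hb2 : b.val ∈ T₂ := Or.resolve_left b.2 hb1
        rw [psiF_mem2 Γ T₁ T₂ a ha2 (Subgroup.subset_closure ⟨a.val, ha2, rfl⟩),
          psiF_mem2 Γ T₁ T₂ b hb2 (Subgroup.subset_closure ⟨b.val, hb2, rfl⟩)]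
        exact Commute.map (Subtype.ext (racgGen_comm hadj').eq) _)

variable {Γ T₁ T₂} in
lemma amalg_comp_sub (hedge : ∀ a b : V, a ∈ T₁ → a ∉ T₂ → b ∈ T₂ → b ∉ T₁ → ¬ Γ.Adj a b) :
    (amalgToSub Γ T₁ T₂).comp (subToAmalg hedge)
      = (specialEquiv Γ (T₁ ∪ T₂)).toMonoidHom := by
  apply PresentedGroup.ext
  intro v
  show amalgToSub Γ T₁ T₂ (subToAmalg hedge (racgGen _ v)) = specialEquiv Γ (T₁ ∪ T₂) (racgGen _ v)
  rw [show subToAmalg hedge (racgGen _ v) = psiF Γ T₁ T₂ v from racgLift_gen _ _ _ v]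
  apply Subtype.ext
  have hrhs : ((specialEquiv Γ (T₁ ∪ T₂) (racgGen _ v)) : RACG Γ) = racgGen Γ v.val := by
    rw [specialEquiv_apply_coe]
    exact inducedHom_gen _ v
  rw [hrhs]
  by_cases h1 : v.val ∈ T₁
  · rw [psiF_mem1 Γ T₁ T₂ v h1 (Subgroup.subset_closure ⟨v.val, h1, rfl⟩), amalgToSub_of_true]
    rfl
  · have h2 : v.val ∈ T₂ := Or.resolve_left v.2 h1
    rw [psiF_mem2 Γ T₁ T₂ v h2 (Subgroup.subset_closure ⟨v.val, h2, rfl⟩), amalgToSub_of_false]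
    rfl

variable {Γ T₁ T₂} in
/-- The subgroup generated by `T₁ ∪ T₂` is the amalgamated product. -/
noncomputable def amalgEquiv
    (hedge : ∀ a b : V, a ∈ T₁ → a ∉ T₂ → b ∈ T₂ → b ∉ T₁ → ¬ Γ.Adj a b) :
    ↥(closure (racgGen Γ '' (T₁ ∪ T₂))) ≃* AmalgProd (jmap₁ Γ T₁ T₂) (jmap₂ Γ T₁ T₂) := by
  refine (MonoidHom.toMulEquiv (amalgToSub Γ T₁ T₂)
    ((subToAmalg hedge).comp (specialEquiv Γ (T₁ ∪ T₂)).symm.toMonoidHom) ?_ ?_).symm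
  · -- composite on the amalgam side is the identity
    apply Monoid.PushoutI.hom_ext_nonempty
    intro b
    cases b
    · -- false : T₂ side
      apply subgroup_hom_ext
      rintro x ⟨w, hw, rfl⟩
      show (subToAmalg hedge).comp (specialEquiv Γ (T₁ ∪ T₂)).symm.toMonoidHom
        (amalgToSub Γ T₁ T₂ (Monoid.PushoutI.of (φ := famHom (jmap₁ Γ T₁ T₂) (jmap₂ Γ T₁ T₂))
          false ⟨racgGen Γ w, _⟩)) = Monoid.PushoutI.of false ⟨racgGen Γ w, _⟩
      erw [amalgToSub_of_false]
      have hwU : racgGen Γ w ∈ closure (racgGen Γ '' (T₁ ∪ T₂)) :=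
        Subgroup.subset_closure ⟨w, Or.inr hw, rfl⟩
      have key : (specialEquiv Γ (T₁ ∪ T₂)).symm
          (Subgroup.inclusion (le2U Γ T₁ T₂) ⟨racgGen Γ w, Subgroup.subset_closure ⟨w, hw, rfl⟩⟩)
            = racgGen (Γ.induce (T₁ ∪ T₂)) ⟨w, Or.inr hw⟩ := by
        apply (specialEquiv Γ (T₁ ∪ T₂)).injective
        rw [MulEquiv.apply_symm_apply]
        apply Subtype.ext
        rw [specialEquiv_apply_coe, inducedHom_gen]
        rfl
      show subToAmalg hedge ((specialEquiv Γ (T₁ ∪ T₂)).symm _) = _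
      rw [key, show subToAmalg hedge (racgGen _ _) = psiF Γ T₁ T₂ _ from racgLift_gen _ _ _ _,
        psiF_mem2 Γ T₁ T₂ ⟨w, Or.inr hw⟩ hw (Subgroup.subset_closure ⟨w, hw, rfl⟩)]
    · -- true : T₁ side
      apply subgroup_hom_ext
      rintro x ⟨w, hw, rfl⟩
      show (subToAmalg hedge).comp (specialEquiv Γ (T₁ ∪ T₂)).symm.toMonoidHom
        (amalgToSub Γ T₁ T₂ (Monoid.PushoutI.of (φ := famHom (jmap₁ Γ T₁ T₂) (jmap₂ Γ T₁ T₂))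
          true ⟨racgGen Γ w, _⟩)) = Monoid.PushoutI.of true ⟨racgGen Γ w, _⟩
      erw [amalgToSub_of_true]
      have key : (specialEquiv Γ (T₁ ∪ T₂)).symm
          (Subgroup.inclusion (le1U Γ T₁ T₂) ⟨racgGen Γ w, Subgroup.subset_closure ⟨w, hw, rfl⟩⟩)
            = racgGen (Γ.induce (T₁ ∪ T₂)) ⟨w, Or.inl hw⟩ := by
        apply (specialEquiv Γ (T₁ ∪ T₂)).injective
        rw [MulEquiv.apply_symm_apply]
        apply Subtype.ext
        rw [specialEquiv_apply_coe, inducedHom_gen]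
        rfl
      show subToAmalg hedge ((specialEquiv Γ (T₁ ∪ T₂)).symm _) = _
      rw [key, show subToAmalg hedge (racgGen _ _) = psiF Γ T₁ T₂ _ from racgLift_gen _ _ _ _,
        psiF_mem1 Γ T₁ T₂ ⟨w, Or.inl hw⟩ hw (Subgroup.subset_closure ⟨w, hw, rfl⟩)]
  · -- composite on the subgroup side is the identity
    ext x
    have := DFunLike.congr_fun (amalg_comp_sub hedge) ((specialEquiv Γ (T₁ ∪ T₂)).symm x)
    simp only [MonoidHom.comp_apply, MulEquiv.coe_toMonoidHom] at this ⊢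
    rw [this, MulEquiv.apply_symm_apply]
    rfl

end Amalgam

/-- If `T₁, T₂` are vertex sets of embedded four-cycles in a triangle-free graph
with `T₁ ∩ T₂ = {s,t,u}` where `s,u` are adjacent to `t` (and `s ≠ u`), then `s,u`
are non-adjacent, `W_{T₁ ∩ T₂} ≅ D∞ × ℤ/2ℤ`, each `W_{Tᵢ} ≅ D∞ × D∞`, and
`W_{T₁ ∪ T₂}` is the amalgamated product `W_{T₁} *_{W_{T₁ ∩ T₂}} W_{T₂}`. -/
theorem stmt17 {V : Type u} [Fintype V] [DecidableEq V] (Γ : SimpleGraph V)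
    (htf : Γ.CliqueFree 3) (T₁ T₂ : Set V)
    (c₁ : FourCycle Γ) (hT₁ : T₁ = {c₁.v 0, c₁.v 1, c₁.v 2, c₁.v 3})
    (c₂ : FourCycle Γ) (hT₂ : T₂ = {c₂.v 0, c₂.v 1, c₂.v 2, c₂.v 3})
    (s t u : V) (hsu : s ≠ u) (hst : Γ.Adj s t) (htu : Γ.Adj t u)
    (hint : T₁ ∩ T₂ = {s, t, u}) :
    ¬ Γ.Adj s u ∧
    Nonempty (↥(Subgroup.closure (racgGen Γ '' (T₁ ∩ T₂))) ≃*
      Dinf × Multiplicative (ZMod 2)) ∧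
    Nonempty (↥(Subgroup.closure (racgGen Γ '' T₁)) ≃* Dinf × Dinf) ∧
    Nonempty (↥(Subgroup.closure (racgGen Γ '' T₂)) ≃* Dinf × Dinf) ∧
    Nonempty (↥(Subgroup.closure (racgGen Γ '' (T₁ ∪ T₂))) ≃*
      AmalgProd
        (Subgroup.inclusion (Subgroup.closure_mono
          (Set.image_mono Set.inter_subset_left)) :
            ↥(Subgroup.closure (racgGen Γ '' (T₁ ∩ T₂))) →*
            ↥(Subgroup.closure (racgGen Γ '' T₁)))
        (Subgroup.inclusion (Subgroup.closure_mono
          (Set.image_mono Set.inter_subset_right)))) := by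
  classical
  -- basic memberships
  have hsI : s ∈ T₁ ∩ T₂ := by rw [hint]; simp
  have htI : t ∈ T₁ ∩ T₂ := by rw [hint]; simp
  have huI : u ∈ T₁ ∩ T₂ := by rw [hint]; simp
  -- s and u are non-adjacent
  have hnsu : ¬ Γ.Adj s u := by
    intro h
    exact htf {t, s, u} (SimpleGraph.is3Clique_triple_iff.mpr ⟨hst.symm, htu, h⟩)
  -- the intersection iso
  have isoI : ↥(Subgroup.closure (racgGen Γ '' (T₁ ∩ T₂))) ≃*
      Dinf × Multiplicative (ZMod 2) := by
    refine (specialEquiv Γ (T₁ ∩ T₂)).symm.trans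
      (iso2 (Γ.induce (T₁ ∩ T₂)) ⟨s, hsI⟩ ⟨t, htI⟩ ⟨u, huI⟩ hst htu hnsu
        (fun h => hsu (congrArg Subtype.val h)) ?_)
    rintro ⟨x, hx⟩
    rw [hint] at hx
    rcases hx with rfl | rfl | rfl
    · exact Or.inl rfl
    · exact Or.inr (Or.inl rfl)
    · exact Or.inr (Or.inr rfl)
  -- the four-cycle isos
  have iso4T : ∀ (T : Set V) (c : FourCycle Γ), T = {c.v 0, c.v 1, c.v 2, c.v 3} →
      Nonempty (↥(Subgroup.closure (racgGen Γ '' T)) ≃* Dinf × Dinf) := by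
    intro T c hT
    have m0 : c.v 0 ∈ T := by rw [hT]; simp
    have m1 : c.v 1 ∈ T := by rw [hT]; simp
    have m2 : c.v 2 ∈ T := by rw [hT]; simp
    have m3 : c.v 3 ∈ T := by rw [hT]; simp
    refine ⟨(specialEquiv Γ T).symm.trans
      (iso4 (Γ.induce T) ⟨c.v 0, m0⟩ ⟨c.v 1, m1⟩ ⟨c.v 2, m2⟩ ⟨c.v 3, m3⟩
        c.a01 c.a12 c.a23 c.a30 c.nadj02 c.nadj13
        (fun h => c.ne02 (congrArg Subtype.val h))
        (fun h => c.ne13 (congrArg Subtype.val h)) ?_)⟩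
    rintro ⟨x, hx⟩
    rw [hT] at hx
    rcases hx with rfl | rfl | rfl | rfl
    · exact Or.inl rfl
    · exact Or.inr (Or.inl rfl)
    · exact Or.inr (Or.inr (Or.inl rfl))
    · exact Or.inr (Or.inr (Or.inr rfl))
  -- structural lemma: a vertex of a four-cycle through the non-adjacent pair `s, u`
  -- distinct from both is adjacent to both
  have hkey : ∀ (c : FourCycle Γ) (T : Set V), T = {c.v 0, c.v 1, c.v 2, c.v 3} →
      s ∈ T → u ∈ T → ∀ a ∈ T, a ≠ s → a ≠ u → Γ.Adj s a ∧ Γ.Adj u a := by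
    intro c T hT hsT huT a haT has hau
    have exI : ∀ x ∈ T, ∃ i, c.v i = x := by
      rw [hT]; rintro x (rfl | rfl | rfl | rfl)
      exacts [⟨0, rfl⟩, ⟨1, rfl⟩, ⟨2, rfl⟩, ⟨3, rfl⟩]
    obtain ⟨i, hi⟩ := exI s hsT
    obtain ⟨j, hj⟩ := exI u huT
    obtain ⟨k, hk⟩ := exI a haT
    have hij : i ≠ j := fun h => hsu (by rw [← hi, ← hj, h])
    have hik : i ≠ k := fun h => has (by rw [← hk, ← hi, h])
    have hjk : j ≠ k := fun h => hau (by rw [← hk, ← hj, h])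
    constructor
    · rw [← hi, ← hk]
      exact c.adj_of_nadj hij hik hjk (by rw [hi, hj]; exact hnsu)
    · rw [← hj, ← hk]
      exact c.adj_of_nadj hij.symm hjk hik (by rw [hi, hj]; exact fun h => hnsu h.symm)
  -- no edges between `T₁ \ T₂` and `T₂ \ T₁`
  have nedge : ∀ a b : V, a ∈ T₁ → a ∉ T₂ → b ∈ T₂ → b ∉ T₁ → ¬ Γ.Adj a b := by
    intro a b ha1 ha2 hb2 hb1 hab
    have has : a ≠ s := fun h => ha2 (h ▸ hsI.2)
    have hau : a ≠ u := fun h => ha2 (h ▸ huI.2)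
    have hbs : b ≠ s := fun h => hb1 (h ▸ hsI.1)
    have hbu : b ≠ u := fun h => hb1 (h ▸ huI.1)
    have h1 := hkey c₁ T₁ hT₁ hsI.1 huI.1 a ha1 has hau
    have h2 := hkey c₂ T₂ hT₂ hsI.2 huI.2 b hb2 hbs hbu
    exact htf {s, a, b} (SimpleGraph.is3Clique_triple_iff.mpr ⟨h1.1, h2.1, hab⟩)
  exact ⟨hnsu, ⟨isoI⟩, iso4T T₁ c₁ hT₁, iso4T T₂ c₂ hT₂, ⟨amalgEquiv nedge⟩⟩
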